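/- Let $d \geq 1$ and let $E$ be a finite set with $|E| \leq R$ for an integer $R \geq 0$. The number of functions $\nu \colon E \to \{0,1\}^{2d}$ such that $\sum_{v \in E} \min\{|\nu(v)|, 2d - |\nu(v)|\} = R$ and $1 \leq |\nu(v)| \leq 2d-1$ for all $v$ (where $|\nu(v)|$ denotes the number of coordinates of $\nu(v)$ equal to 1) is at most $(2d)^{2R}$. -/

import Mathlib

open Classical Finset in
private lemma choose_le_pow_min (n k : ℕ) (hk : k ≤ n) :
    n.choose k ≤ n ^ min k (n - k) := by
  rcases le_total k (n - k) with h | h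
  · rw [min_eq_left h]; exact Nat.choose_le_pow n k
  · rw [min_eq_right h, ← Nat.choose_symm hk]; exact Nat.choose_le_pow n (n - k)

open Classical Finset in
private lemma count_aux (d R : ℕ) (hd : 1 ≤ d) (E : Type*) [Fintype E]
    (hE : Fintype.card E ≤ R) (deg : (Fin (2 * d) → Bool) → ℕ)
    (hdeg : ∀ f, deg f = (Finset.univ.filter (fun i => f i = true)).card) :
    {ν : E → (Fin (2 * d) → Bool) |
        (∑ v : E, min (deg (ν v)) (2 * d - deg (ν v))) = R ∧
        ∀ v : E, 1 ≤ deg (ν v) ∧ deg (ν v) ≤ 2 * d - 1}.ncard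
      ≤ (2 * d) ^ (2 * R) := by
  classical
  rw [Set.ncard_eq_toFinset_card']
  set T := {ν : E → (Fin (2 * d) → Bool) |
        (∑ v : E, min (deg (ν v)) (2 * d - deg (ν v))) = R ∧
        ∀ v : E, 1 ≤ deg (ν v) ∧ deg (ν v) ≤ 2 * d - 1}.toFinset with hT
  have hdpos : 0 < 2 * d := by omega
  have hmem : ∀ ν ∈ T, ∀ v, deg (ν v) ≤ 2 * d - 1 := by
    intro ν hν v
    rw [hT, Set.mem_toFinset] at hν
    exact (hν.2 v).2
  set degF : (E → (Fin (2 * d) → Bool)) → (E → Fin (2 * d)) :=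
    fun ν v => ⟨min (deg (ν v)) (2 * d - 1), by omega⟩ with hdegF
  have hdegF_eq : ∀ ν ∈ T, ∀ v, ((degF ν v : Fin (2 * d)) : ℕ) = deg (ν v) := by
    intro ν hν v
    simp only [hdegF, min_eq_left (hmem ν hν v)]
  have key : T.card = ∑ g : E → Fin (2 * d), (T.filter (fun ν => degF ν = g)).card :=
    Finset.card_eq_sum_card_fiberwise (fun ν _ => Finset.mem_univ _)
  have fiber_bound : ∀ g : E → Fin (2 * d),
      (T.filter (fun ν => degF ν = g)).card ≤ (2 * d) ^ R := by
    intro g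
    rcases (T.filter (fun ν => degF ν = g)).eq_empty_or_nonempty with he | ⟨ν₀, hν₀⟩
    · rw [he]; simp
    · simp only [Finset.mem_filter] at hν₀
      have hgval : ∀ v, ((g v : Fin (2 * d)) : ℕ) = deg (ν₀ v) := by
        intro v; rw [← hν₀.2]; exact hdegF_eq ν₀ hν₀.1 v
      have hsum : ∑ v : E, min ((g v : ℕ)) (2 * d - (g v : ℕ)) = R := by
        have := (Set.mem_toFinset.mp hν₀.1).1
        calc ∑ v : E, min ((g v : ℕ)) (2 * d - (g v : ℕ))
            = ∑ v : E, min (deg (ν₀ v)) (2 * d - deg (ν₀ v)) := by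
              apply Finset.sum_congr rfl; intro v _; rw [hgval v]
          _ = R := this
      -- nonempty target subtypes
      have hne : ∀ v : E, Nonempty {s : Finset (Fin (2 * d)) // s.card = (g v : ℕ)} := by
        intro v
        obtain ⟨t, -, ht⟩ := Finset.exists_subset_card_eq (s := (Finset.univ : Finset (Fin (2 * d))))
          (n := (g v : ℕ)) (by simpa using (g v).isLt.le)
        exact ⟨⟨t, ht⟩⟩
      have := fun v => hne v
      have hcard_le : (T.filter (fun ν => degF ν = g)).card
          ≤ Fintype.card (∀ v : E, {s : Finset (Fin (2 * d)) // s.card = (g v : ℕ)}) := by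
        rw [← Finset.card_univ]
        apply Finset.card_le_card_of_injOn
          (fun ν v => if h : (Finset.univ.filter (fun i => ν v i = true)).card = (g v : ℕ)
            then ⟨Finset.univ.filter (fun i => ν v i = true), h⟩
            else Classical.arbitrary _)
        · intro ν _; exact Finset.mem_univ _
        · intro ν hν ν' hν' hfe
          simp only [Finset.coe_filter, Set.mem_setOf_eq] at hν hν'
          have hc : ∀ v, (Finset.univ.filter (fun i => ν v i = true)).card = (g v : ℕ) := by
            intro v
            rw [← hν.2]
            rw [hdegF_eq ν hν.1 v, hdeg]
          have hc' : ∀ v, (Finset.univ.filter (fun i => ν' v i = true)).card = (g v : ℕ) := by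
            intro v
            rw [← hν'.2]
            rw [hdegF_eq ν' hν'.1 v, hdeg]
          funext v i
          have := congrFun hfe v
          dsimp only at this
          rw [dif_pos (hc v), dif_pos (hc' v)] at this
          have hset : (Finset.univ.filter (fun i => ν v i = true))
              = (Finset.univ.filter (fun i => ν' v i = true)) := by
            exact congrArg Subtype.val this
          have hiff : ν v i = true ↔ ν' v i = true := by
            constructor
            · intro h
              have : i ∈ Finset.univ.filter (fun i => ν' v i = true) := by
                rw [← hset]; simp [h]
              simpa using this
            · intro h
              have : i ∈ Finset.univ.filter (fun i => ν v i = true) := by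
                rw [hset]; simp [h]
              simpa using this
          rcases Bool.eq_false_or_eq_true (ν v i) with hb | hb <;>
            rcases Bool.eq_false_or_eq_true (ν' v i) with hb' | hb' <;>
            simp only [hb, hb'] at hiff ⊢ <;> tauto
      calc (T.filter (fun ν => degF ν = g)).card
          ≤ Fintype.card (∀ v : E, {s : Finset (Fin (2 * d)) // s.card = (g v : ℕ)}) :=
            hcard_le
        _ = ∏ v : E, (2 * d).choose (g v : ℕ) := by
            rw [Fintype.card_pi]
            apply Finset.prod_congr rfl
            intro v _
            rw [Fintype.card_finset_len, Fintype.card_fin]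
        _ ≤ ∏ v : E, (2 * d) ^ min ((g v : ℕ)) (2 * d - (g v : ℕ)) := by
            apply Finset.prod_le_prod (fun _ _ => Nat.zero_le _)
            intro v _
            exact_mod_cast choose_le_pow_min (2 * d) (g v : ℕ) (g v).isLt.le
        _ = (2 * d) ^ (∑ v : E, min ((g v : ℕ)) (2 * d - (g v : ℕ))) := by
            rw [Finset.prod_pow_eq_pow_sum]
        _ = (2 * d) ^ R := by rw [hsum]
  calc T.card = ∑ g : E → Fin (2 * d), (T.filter (fun ν => degF ν = g)).card := key
    _ ≤ ∑ _g : E → Fin (2 * d), (2 * d) ^ R :=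
        Finset.sum_le_sum (fun g _ => fiber_bound g)
    _ = (2 * d) ^ Fintype.card E * (2 * d) ^ R := by
        rw [Finset.sum_const, Finset.card_univ, Fintype.card_fun, Fintype.card_fin,
          smul_eq_mul]
    _ ≤ (2 * d) ^ R * (2 * d) ^ R := by
        apply Nat.mul_le_mul_right
        exact Nat.pow_le_pow_right (by omega) hE
    _ = (2 * d) ^ (2 * R) := by rw [← pow_add]; ring_nf

open Classical in
theorem count_patterns (d R : ℕ) (hd : 1 ≤ d) (E : Type*) [Fintype E]
    (hE : Fintype.card E ≤ R) :
    {ν : E → (Fin (2 * d) → Bool) |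
        (∑ v : E, min ((Finset.univ.filter (fun i => ν v i = true)).card)
            (2 * d - (Finset.univ.filter (fun i => ν v i = true)).card)) = R ∧
        ∀ v : E, 1 ≤ (Finset.univ.filter (fun i => ν v i = true)).card ∧
          (Finset.univ.filter (fun i => ν v i = true)).card ≤ 2 * d - 1}.ncard
      ≤ (2 * d) ^ (2 * R) := by
  exact count_aux d R hd E hE
    (fun f => (Finset.univ.filter (fun i => f i = true)).card) (fun f => rfl)
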